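/- Strong L^p monotonicity of the semilinear form: for p ≥ 2 there exists C_L > 0 (one may take C_L = 2^{p−2}) such that for all measurable u, u_h ∈ L^p(Ω), ‖u − u_h‖_{L^p(Ω)}^p ≤ C_L ( B(u; u, u − u_h) − B(u_h; u_h, u − u_h) ), where B(w; u, v) = ∫_Ω |w|^{p−2} u v dx. -/

import Mathlib

open MeasureTheory Real


private lemma phi_eq' (p : ℝ) (hp : 2 ≤ p) {x : ℝ} (hx : 0 ≤ x) :
    x ^ (p - 2) * x = x ^ (p - 1) := by
  have h : p - 1 = (p - 2) + 1 := by ring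
  rw [h, Real.rpow_add_one' hx (by rw [← h]; nlinarith)]

private lemma cross_term (p : ℝ) (hp : 2 ≤ p) {x y : ℝ} (hx : 0 ≤ x) (hy : 0 ≤ y) :
    x ^ (p - 1) * y ≤ x ^ p + y ^ p := by
  have hp1 : (0:ℝ) ≤ p - 1 := by linarith
  have hxp : x ^ (p-1) * x = x ^ p := by
    rw [← Real.rpow_add_one' hx (by linarith : p - 1 + 1 ≠ 0)]; ring_nf
  have hyp : y ^ (p-1) * y = y ^ p := by
    rw [← Real.rpow_add_one' hy (by linarith : p - 1 + 1 ≠ 0)]; ring_nf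
  rcases le_total y x with h | h
  · have : x ^ (p-1) * y ≤ x ^ (p-1) * x :=
      mul_le_mul_of_nonneg_left h (Real.rpow_nonneg hx _)
    have h2 := Real.rpow_nonneg hy p
    linarith [hxp ▸ this]
  · have h1 : x ^ (p-1) ≤ y ^ (p-1) := Real.rpow_le_rpow hx h hp1
    have : x ^ (p-1) * y ≤ y ^ (p-1) * y := mul_le_mul_of_nonneg_right h1 hy
    have h2 := Real.rpow_nonneg hx p
    linarith [hyp ▸ this]

private lemma g_bound (p : ℝ) (hp : 2 ≤ p) (a b : ℝ) :
    |(|a| ^ (p - 2) * a - |b| ^ (p - 2) * b) * (a - b)| ≤ 3 * (|a| ^ p + |b| ^ p) := by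
  have ha := abs_nonneg a
  have hb := abs_nonneg b
  have hphia : abs (|a| ^ (p-2) * a) = |a| ^ (p - 1) := by
    rw [abs_mul, abs_of_nonneg (Real.rpow_nonneg ha _), phi_eq' p hp ha]
  have hphib : abs (|b| ^ (p-2) * b) = |b| ^ (p - 1) := by
    rw [abs_mul, abs_of_nonneg (Real.rpow_nonneg hb _), phi_eq' p hp hb]
  have h1 : |(|a| ^ (p - 2) * a - |b| ^ (p - 2) * b) * (a - b)| ≤
      (|a| ^ (p-1) + |b| ^ (p-1)) * (|a| + |b|) := by
    rw [abs_mul]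
    apply mul_le_mul _ (abs_sub a b) (abs_nonneg _) (by positivity)
    calc abs (|a| ^ (p - 2) * a - |b| ^ (p - 2) * b)
        ≤ abs (|a| ^ (p-2) * a) + abs (|b| ^ (p-2) * b) := abs_sub _ _
      _ = |a| ^ (p-1) + |b| ^ (p-1) := by rw [hphia, hphib]
  have haa : |a| ^ (p-1) * |a| = |a| ^ p := by
    rw [← Real.rpow_add_one' ha (by linarith : p - 1 + 1 ≠ 0)]; ring_nf
  have hbb : |b| ^ (p-1) * |b| = |b| ^ p := by
    rw [← Real.rpow_add_one' hb (by linarith : p - 1 + 1 ≠ 0)]; ring_nf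
  have hab := cross_term p hp ha hb
  have hba := cross_term p hp hb ha
  calc |(|a| ^ (p - 2) * a - |b| ^ (p - 2) * b) * (a - b)|
      ≤ (|a| ^ (p-1) + |b| ^ (p-1)) * (|a| + |b|) := h1
    _ = |a| ^ (p-1) * |a| + |a| ^ (p-1) * |b| + (|b| ^ (p-1) * |a| + |b| ^ (p-1) * |b|) := by ring
    _ ≤ |a| ^ p + (|a| ^ p + |b| ^ p) + ((|b| ^ p + |a| ^ p) + |b| ^ p) := by
        rw [haa, hbb]; exact add_le_add (add_le_add le_rfl hab) (add_le_add hba le_rfl)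
    _ = 3 * (|a| ^ p + |b| ^ p) := by ring

-- helper: for x ≥ 0, x^(p-2) * x = x^(p-1)
private lemma phi_eq_aux (p : ℝ) (hp : 2 ≤ p) {x : ℝ} (hx : 0 ≤ x) :
    x ^ (p - 2) * x = x ^ (p - 1) := by
  have h : p - 1 = (p - 2) + 1 := by ring
  rw [h, Real.rpow_add_one' hx (by rw [← h]; nlinarith)]

-- superadditivity: x^q + y^q ≤ (x+y)^q for q ≥ 1, x,y ≥ 0
private lemma superadd {q : ℝ} (hq : 1 ≤ q) {x y : ℝ} (hx : 0 ≤ x) (hy : 0 ≤ y) :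
    x ^ q + y ^ q ≤ (x + y) ^ q := by
  have hq0 : q ≠ 0 := by linarith
  have key : ∀ z : ℝ, 0 ≤ z → z ≤ x + y → z ^ q ≤ (x + y) ^ (q - 1) * z := by
    intro z hz hzxy
    have : z ^ q = z ^ (q - 1) * z := by
      rw [← Real.rpow_add_one' hz (by linarith)]; ring_nf
    rw [this]
    exact mul_le_mul_of_nonneg_right
      (Real.rpow_le_rpow hz hzxy (by linarith)) hz
  calc x ^ q + y ^ q ≤ (x + y) ^ (q - 1) * x + (x + y) ^ (q - 1) * y :=
        add_le_add (key x hx (by linarith)) (key y hy (by linarith))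
    _ = (x + y) ^ (q - 1) * (x + y) := by ring
    _ = (x + y) ^ q := by
        rw [← Real.rpow_add_one' (by linarith) (by linarith)]; ring_nf

-- convexity: (x+y)^q ≤ 2^(q-1) * (x^q + y^q)
private lemma convex_ineq {q : ℝ} (hq : 1 ≤ q) {x y : ℝ} (hx : 0 ≤ x) (hy : 0 ≤ y) :
    (x + y) ^ q ≤ 2 ^ (q - 1) * (x ^ q + y ^ q) := by
  have h := (convexOn_rpow hq).2 (Set.mem_Ici.2 hx) (Set.mem_Ici.2 hy)
    (by norm_num : (0:ℝ) ≤ 1/2) (by norm_num : (0:ℝ) ≤ 1/2) (by norm_num)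
  simp only [smul_eq_mul] at h
  have h2 : ((x + y)/2) ^ q ≤ (x ^ q + y ^ q)/2 := by
    have : (1/2 : ℝ) * x + (1/2) * y = (x+y)/2 := by ring
    rw [this] at h; linarith
  have h3 : (x + y) ^ q = 2 ^ q * ((x+y)/2) ^ q := by
    rw [← Real.mul_rpow (by norm_num) (by positivity)]
    norm_num [mul_div_cancel₀]
  rw [h3]
  calc 2 ^ q * ((x+y)/2) ^ q ≤ 2 ^ q * ((x ^ q + y ^ q)/2) := by
        exact mul_le_mul_of_nonneg_left h2 (by positivity)
    _ = 2 ^ (q - 1) * (x ^ q + y ^ q) := by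
        rw [Real.rpow_sub (by norm_num), Real.rpow_one]; ring

-- main claim under normalization b ≤ a, 0 ≤ a + b
private lemma claim_normalized (p : ℝ) (hp : 2 ≤ p) {a b : ℝ} (hba : b ≤ a) (hab : 0 ≤ a + b) :
    2 * ((a - b)/2) ^ (p - 1) ≤ |a| ^ (p - 2) * a - |b| ^ (p - 2) * b := by
  have ha : 0 ≤ a := by rcases le_or_gt 0 b with h | h <;> linarith
  have hq : 1 ≤ p - 1 := by linarith
  set c : ℝ := (a - b)/2 with hc
  have hc0 : 0 ≤ c := by simp [hc]; linarith
  rw [abs_of_nonneg ha, phi_eq_aux p hp ha]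
  rcases le_or_gt 0 b with hb | hb
  · -- b ≥ 0 : superadditivity
    rw [abs_of_nonneg hb, phi_eq_aux p hp hb]
    have h1 : b ^ (p-1) + (2*c) ^ (p-1) ≤ (b + 2*c) ^ (p-1) :=
      superadd hq hb (by linarith)
    have h2 : b + 2*c = a := by rw [hc]; ring
    rw [h2] at h1
    have h3 : (2:ℝ) * c ^ (p-1) ≤ (2*c) ^ (p-1) := by
      rw [Real.mul_rpow (by norm_num) hc0]
      have : (2:ℝ) ≤ 2 ^ (p-1) := by
        nth_rw 1 [← Real.rpow_one 2]
        exact Real.rpow_le_rpow_of_exponent_le (by norm_num) hq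
      nlinarith [Real.rpow_nonneg hc0 (p-1)]
    linarith
  · -- b < 0 : convexity
    have hnb : 0 ≤ -b := by linarith
    rw [abs_of_neg hb]
    have hphib : (-b) ^ (p - 2) * b = -((-b) ^ (p-1)) := by
      have := phi_eq_aux p hp hnb
      nlinarith [this]
    rw [hphib]
    have h1 : (a + (-b)) ^ (p-1) ≤ 2 ^ (p-1-1) * (a ^ (p-1) + (-b) ^ (p-1)) :=
      convex_ineq hq ha hnb
    have h2c : a + (-b) = 2*c := by rw [hc]; ring
    rw [h2c] at h1
    have h3 : (2*c) ^ (p-1) = 2 ^ (p-1) * c ^ (p-1) :=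
      Real.mul_rpow (by norm_num) hc0
    rw [h3] at h1
    have h4 : (2:ℝ) ^ (p-1) = 2 ^ (p-1-1) * 2 := by
      rw [← Real.rpow_add_one (by norm_num) (p-1-1)]; ring_nf
    have h5 : 0 < (2:ℝ) ^ (p-1-1) := Real.rpow_pos_of_pos (by norm_num) _
    nlinarith [Real.rpow_nonneg hc0 (p-1)]

-- pointwise inequality
private lemma pointwise (p : ℝ) (hp : 2 ≤ p) (a b : ℝ) :
    |a - b| ^ p ≤ 2 ^ (p - 2) * ((|a| ^ (p - 2) * a - |b| ^ (p - 2) * b) * (a - b)) := by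
  -- reduce to b ≤ a
  have main : ∀ a b : ℝ, b ≤ a → 0 ≤ a + b →
      |a - b| ^ p ≤ 2 ^ (p - 2) * ((|a| ^ (p - 2) * a - |b| ^ (p - 2) * b) * (a - b)) := by
    intro a b hba hab
    have hab0 : 0 ≤ a - b := by linarith
    set c : ℝ := (a - b)/2 with hc
    have hc0 : 0 ≤ c := by simp [hc]; linarith
    have key := claim_normalized p hp hba hab
    have h1 : |a - b| ^ p = 2 ^ p * c ^ p := by
      rw [abs_of_nonneg hab0, show a - b = 2 * c by rw [hc]; ring,
        Real.mul_rpow (by norm_num) hc0]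
    have h2 : c ^ (p-1) * c = c ^ p := by
      rw [← Real.rpow_add_one' hc0 (by linarith)]; ring_nf
    have h3 : (2:ℝ) ^ (p-2) * 2 * 2 = 2 ^ p := by
      rw [← Real.rpow_add_one (by norm_num : (2:ℝ) ≠ 0) (p-2),
        ← Real.rpow_add_one (by norm_num : (2:ℝ) ≠ 0) (p-2+1)]
      ring_nf
    have h4 : 0 < (2:ℝ) ^ (p-2) := Real.rpow_pos_of_pos (by norm_num) _
    have hab2c : a - b = 2 * c := by rw [hc]; ring
    calc |a - b| ^ p = 2 ^ p * c ^ p := h1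
      _ = (2 ^ (p-2) * 2 * 2) * c ^ p := by rw [h3]
      _ = 2 ^ (p-2) * ((2 * c ^ (p-1)) * (2 * c)) := by rw [← h2]; ring
      _ ≤ 2 ^ (p-2) * ((|a| ^ (p - 2) * a - |b| ^ (p - 2) * b) * (a - b)) := by
          apply mul_le_mul_of_nonneg_left _ h4.le
          rw [hab2c]
          apply mul_le_mul_of_nonneg_right key (by linarith)
  -- symmetry reductions
  rcases le_total b a with hba | hba
  · rcases le_or_gt 0 (a + b) with hab | hab
    · exact main a b hba hab
    · have := main (-b) (-a) (by linarith) (by linarith)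
      calc |a - b| ^ p = |(-b) - (-a)| ^ p := by rw [show (-b) - (-a) = a - b by ring]
        _ ≤ 2 ^ (p-2) * ((|-b| ^ (p - 2) * (-b) - |-a| ^ (p - 2) * (-a)) * ((-b) - (-a))) := this
        _ = 2 ^ (p-2) * ((|a| ^ (p - 2) * a - |b| ^ (p - 2) * b) * (a - b)) := by
            rw [abs_neg, abs_neg]; ring
  · rcases le_or_gt 0 (a + b) with hab | hab
    · have := main b a hba (by linarith)
      calc |a - b| ^ p = |b - a| ^ p := by rw [abs_sub_comm]
        _ ≤ 2 ^ (p-2) * ((|b| ^ (p - 2) * b - |a| ^ (p - 2) * a) * (b - a)) := this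
        _ = 2 ^ (p-2) * ((|a| ^ (p - 2) * a - |b| ^ (p - 2) * b) * (a - b)) := by ring
    · have := main (-a) (-b) (by linarith) (by linarith)
      calc |a - b| ^ p = |(-a) - (-b)| ^ p := by rw [show (-a) - (-b) = -(a-b) by ring, abs_neg]
        _ ≤ 2 ^ (p-2) * ((|-a| ^ (p - 2) * (-a) - |-b| ^ (p - 2) * (-b)) * ((-a) - (-b))) := this
        _ = 2 ^ (p-2) * ((|a| ^ (p - 2) * a - |b| ^ (p - 2) * b) * (a - b)) := by
            rw [abs_neg, abs_neg]; ring


set_option maxHeartbeats 1000000 in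
theorem semilinear_form_strong_monotonicity {d : ℕ} (Ω : Set (EuclideanSpace ℝ (Fin d)))
    (hΩ : MeasurableSet Ω) (p : ℝ) (hp : 2 ≤ p) :
    ∃ C_L : ℝ, 0 < C_L ∧ ∀ u u_h : EuclideanSpace ℝ (Fin d) → ℝ,
      MemLp u (ENNReal.ofReal p) (volume.restrict Ω) →
      MemLp u_h (ENNReal.ofReal p) (volume.restrict Ω) →
      (∫ x in Ω, |u x - u_h x| ^ p) ≤
        C_L * ∫ x in Ω,
          (|u x| ^ (p - 2) * u x - |u_h x| ^ (p - 2) * u_h x) * (u x - u_h x) := by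
  have hp0 : (0:ℝ) < p := by linarith
  refine ⟨2 ^ (p - 2), Real.rpow_pos_of_pos (by norm_num) _, fun u u_h hu hu_h => ?_⟩
  set μ := volume.restrict Ω with hμ
  have hne : ENNReal.ofReal p ≠ 0 := by
    simp [ENNReal.ofReal_eq_zero]; linarith
  have hnetop : ENNReal.ofReal p ≠ ⊤ := ENNReal.ofReal_ne_top
  have htoReal : (ENNReal.ofReal p).toReal = p := ENNReal.toReal_ofReal hp0.le
  -- integrability of |u - u_h|^p
  have hf_int : Integrable (fun x => |u x - u_h x| ^ p) μ := by
    have h := (hu.sub hu_h).integrable_norm_rpow hne hnetop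
    simpa [htoReal, Real.norm_eq_abs] using h
  -- integrability of |u|^p and |u_h|^p
  have hu_int : Integrable (fun x => |u x| ^ p) μ := by
    have h := hu.integrable_norm_rpow hne hnetop
    simpa [htoReal, Real.norm_eq_abs] using h
  have huh_int : Integrable (fun x => |u_h x| ^ p) μ := by
    have h := hu_h.integrable_norm_rpow hne hnetop
    simpa [htoReal, Real.norm_eq_abs] using h
  -- integrability of the right-hand integrand
  have hg_int : Integrable
      (fun x => (|u x| ^ (p - 2) * u x - |u_h x| ^ (p - 2) * u_h x) * (u x - u_h x)) μ := by
    have hF : Measurable (fun st : ℝ × ℝ =>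
        (|st.1| ^ (p - 2) * st.1 - |st.2| ^ (p - 2) * st.2) * (st.1 - st.2)) := by
      fun_prop
    have hum : AEMeasurable u μ := hu.1.aemeasurable
    have huhm : AEMeasurable u_h μ := hu_h.1.aemeasurable
    have hgm : AEMeasurable
        (fun x => (|u x| ^ (p - 2) * u x - |u_h x| ^ (p - 2) * u_h x) * (u x - u_h x)) μ :=
      hF.comp_aemeasurable (hum.prodMk huhm)
    refine Integrable.mono' ((hu_int.add huh_int).const_mul 3) hgm.aestronglyMeasurable ?_
    filter_upwards with x
    simpa [Real.norm_eq_abs, abs_mul] using g_bound p hp (u x) (u_h x)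
  -- conclude via the pointwise inequality
  calc (∫ x in Ω, |u x - u_h x| ^ p)
      ≤ ∫ x in Ω, 2 ^ (p - 2) *
          ((|u x| ^ (p - 2) * u x - |u_h x| ^ (p - 2) * u_h x) * (u x - u_h x)) := by
        exact integral_mono hf_int (hg_int.const_mul _)
          (fun x => pointwise p hp (u x) (u_h x))
    _ = 2 ^ (p - 2) * ∫ x in Ω,
          (|u x| ^ (p - 2) * u x - |u_h x| ^ (p - 2) * u_h x) * (u x - u_h x) :=
        MeasureTheory.integral_const_mul _ _
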